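/- Let p be a prime, A a commutative ring, π a unit of A, and m₁, m₂ integers; set c := π^{m₂ − p·m₁} (an integer power of the unit π). Then for all x₁, x₂, y₁, y₂ ∈ A, the p-typical Witt vector of length 2 with coefficients (π^{−m₁}·(x₁+y₁), π^{−m₂}·(x₂ + y₂ − c·E_p(x₁,y₁))) equals the Witt vector sum of the Witt vector with coefficients (π^{−m₁}·x₁, π^{−m₂}·x₂) and the Witt vector with coefficients (π^{−m₁}·y₁, π^{−m₂}·y₂). In other words, the rescaling map (x₁,x₂) ↦ (x₁/π^{m₁}, x₂/π^{m₂}) transforms the c-twisted group law (x₁,x₂) ⋆_c (y₁,y₂) = (x₁+y₁, x₂+y₂ − c·E_p(x₁,y₁)) into length-2 Witt vector addition. -/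

import Mathlib

/-- `E_p(a,b) = ∑_{k=1}^{p−1} (binom(p,k)/p)·a^k·b^{p−k}`. -/
def wittE (p : ℕ) {A : Type*} [CommRing A] (a b : A) : A :=
  ∑ k ∈ Finset.Ico 1 p, (p.choose k / p : ℕ) * a ^ k * b ^ (p - k)

open MvPolynomial Finset
open scoped Witt

theorem wittAdd_one' (p : ℕ) [hp : Fact p.Prime] :
    WittVector.wittAdd p 1 =
      X (0, 1) + X (1, 1) -
        ∑ k ∈ Finset.Ico 1 p,
          ((p.choose k / p : ℕ) : MvPolynomial (Fin 2 × ℕ) ℤ) *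
            X ((0 : Fin 2), 0) ^ k * X ((1 : Fin 2), 0) ^ (p - k) := by
  apply MvPolynomial.map_injective (σ := Fin 2 × ℕ) (Int.castRingHom ℚ)
    (fun a b h => by simpa using h)
  rw [WittVector.wittAdd, map_wittStructureInt]
  have hprop := wittStructureRat_prop p (X (0 : Fin 2) + X 1 : MvPolynomial (Fin 2) ℚ) 1
  set S := wittStructureRat p (map (Int.castRingHom ℚ) (X (0 : Fin 2) + X 1 : MvPolynomial (Fin 2) ℤ)) with hSdef
  have hmapX : (map (Int.castRingHom ℚ) (X (0 : Fin 2) + X 1 : MvPolynomial (Fin 2) ℤ)) =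
      (X 0 + X 1 : MvPolynomial (Fin 2) ℚ) := by simp
  rw [hmapX] at hSdef
  have hS0 : S 0 = X ((0:Fin 2), 0) + X ((1:Fin 2), 0) := by
    have h := map_wittStructureInt p (X (0 : Fin 2) + X 1 : MvPolynomial (Fin 2) ℤ) 0
    rw [hmapX] at h
    rw [hSdef, ← h, show wittStructureInt p (X (0:Fin 2) + X 1) = WittVector.wittAdd p from rfl,
      WittVector.wittAdd_zero]
    simp
  rw [← hSdef] at hprop
  rw [wittPolynomial_one] at hprop
  simp only [map_add, bind₁_X_right, bind₁_C_right, map_mul, map_pow, rename_X, rename_C] at hprop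
  have hpne : (MvPolynomial.C (p:ℚ) : MvPolynomial (Fin 2 × ℕ) ℚ) ≠ 0 := by
    simpa using (Nat.cast_ne_zero (R := ℚ)).2 hp.out.ne_zero
  apply mul_left_cancel₀ hpne
  rw [hS0] at hprop
  have hpow := (Commute.all (X ((0:Fin 2),0) : MvPolynomial (Fin 2 × ℕ) ℚ)
    (X ((1:Fin 2),0))).add_pow_prime_eq hp.out
  rw [hpow] at hprop
  have hsum : ((p : ℕ) : MvPolynomial (Fin 2 × ℕ) ℚ) * X ((0:Fin 2),0) * X ((1:Fin 2),0) *
      ∑ k ∈ Finset.Ioo 0 p,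
      (X ((0:Fin 2),0) : MvPolynomial (Fin 2 × ℕ) ℚ) ^ (k - 1) * X ((1:Fin 2),0) ^ (p-k-1) *
        ((p.choose k / p : ℕ) : MvPolynomial (Fin 2 × ℕ) ℚ) =
      ((p : ℕ) : MvPolynomial (Fin 2 × ℕ) ℚ) *
      ∑ k ∈ Finset.Ico 1 p, ((p.choose k / p : ℕ) : MvPolynomial (Fin 2 × ℕ) ℚ) *
        X ((0:Fin 2),0) ^ k * X ((1:Fin 2),0) ^ (p-k) := by
    rw [show Finset.Ioo 0 p = Finset.Ico 1 p from rfl, Finset.mul_sum, Finset.mul_sum]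
    refine Finset.sum_congr rfl fun k hk => ?_
    obtain ⟨h1, h2⟩ := Finset.mem_Ico.mp hk
    obtain ⟨a, rfl⟩ : ∃ a, k = a + 1 := ⟨k - 1, by omega⟩
    obtain ⟨b, hb⟩ : ∃ b, p - (a + 1) = b + 1 := ⟨p - (a + 1) - 1, by omega⟩
    rw [hb, show b + 1 - 1 = b by omega, show a + 1 - 1 = a by omega]
    ring
  rw [hsum] at hprop
  have hcast : ((p : ℕ) : MvPolynomial (Fin 2 × ℕ) ℚ) = MvPolynomial.C (p:ℚ) := by
    simp
  rw [hcast] at hprop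
  simp only [map_sub, map_add, map_sum, map_mul, map_pow, map_X, map_natCast] at *
  linear_combination hprop

theorem witt_add_coeff_one (p : ℕ) [hp : Fact p.Prime] {R : Type*} [CommRing R]
    (x y : WittVector p R) :
    (x + y).coeff 1 = x.coeff 1 + y.coeff 1 - wittE p (x.coeff 0) (y.coeff 0) := by
  rw [WittVector.add_coeff, wittAdd_one']
  simp [WittVector.peval, wittE, Function.uncurry]

theorem wittE_smul (p : ℕ) {A : Type*} [CommRing A] (c a b : A) :
    wittE p (c * a) (c * b) = c ^ p * wittE p a b := by
  unfold wittE
  rw [Finset.mul_sum]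
  refine Finset.sum_congr rfl fun k hk => ?_
  have hk' : k ≤ p := le_of_lt (Finset.mem_Ico.mp hk).2
  rw [mul_pow, mul_pow]
  rw [show c ^ p = c ^ k * c ^ (p - k) by rw [← pow_add, Nat.add_sub_cancel' hk']]
  ring

/-- Section 2.3: the rescaling `(x₁,x₂) ↦ (x₁/π^{m₁}, x₂/π^{m₂})` transforms the
`π^{m₂−pm₁}`-twisted group law into length-2 Witt vector addition. -/
theorem twisted_law_rescales_to_witt_addition
    (p : ℕ) [hp : Fact p.Prime] (A : Type*) [CommRing A]
    (π : Aˣ) (m₁ m₂ : ℤ)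
    (x₁ x₂ y₁ y₂ : A) :
    TruncatedWittVector.mk p
        ![((π ^ (-m₁) : Aˣ) : A) * (x₁ + y₁),
          ((π ^ (-m₂) : Aˣ) : A) *
            (x₂ + y₂ - ((π ^ (m₂ - (p : ℤ) * m₁) : Aˣ) : A) * wittE p x₁ y₁)] =
      TruncatedWittVector.mk p
          ![((π ^ (-m₁) : Aˣ) : A) * x₁, ((π ^ (-m₂) : Aˣ) : A) * x₂] +
        TruncatedWittVector.mk p
          ![((π ^ (-m₁) : Aˣ) : A) * y₁, ((π ^ (-m₂) : Aˣ) : A) * y₂] := by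
  have hadd : ∀ (u v : TruncatedWittVector p 2 A) (i : Fin 2),
      (u + v).coeff i = (u.out + v.out).coeff (i : ℕ) := by
    intro u v i
    rfl
  have hout0 : ∀ (w : Fin 2 → A),
      (TruncatedWittVector.mk p w).out.coeff 0 = w 0 := fun w => by
    simpa using (TruncatedWittVector.coeff_out (p := p) (TruncatedWittVector.mk p w) (0 : Fin 2))
  have hout1 : ∀ (w : Fin 2 → A),
      (TruncatedWittVector.mk p w).out.coeff 1 = w 1 := fun w => by
    simpa using (TruncatedWittVector.coeff_out (p := p) (TruncatedWittVector.mk p w) (1 : Fin 2))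
  have hunit : ((π ^ (-m₂) : Aˣ) : A) * ((π ^ (m₂ - (p : ℤ) * m₁) : Aˣ) : A) =
      ((π ^ (-m₁) : Aˣ) : A) ^ p := by
    rw [← Units.val_mul, ← zpow_add, ← Units.val_pow_eq_pow_val, ← zpow_natCast _ p,
      ← zpow_mul]
    ring_nf
  ext i
  fin_cases i
  · rw [hadd]
    simp only [Fin.mk_zero, Fin.val_zero]
    rw [WittVector.add_coeff_zero, hout0, hout0, TruncatedWittVector.coeff_mk]
    simp [mul_add]
  · rw [hadd]
    simp only [Fin.mk_one, Fin.val_one]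
    rw [witt_add_coeff_one, hout0, hout0, hout1, hout1, TruncatedWittVector.coeff_mk]
    simp only [Matrix.cons_val_one, Matrix.head_cons, Matrix.cons_val_zero]
    rw [wittE_smul, ← hunit]
    ring
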